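/- Let B, Z: ℝ → ℝ be continuous with B(0) = Z(0) = 0, and suppose lim_{x → -∞} B(x)/x = a and lim_{x → -∞} Z(x)/x = b with a < b. Then D(Z,B) and R(Z,B) are well-defined and satisfy lim_{x → -∞} R(Z,B)(x)/x = a and lim_{x → -∞} D(Z,B)(x)/x = b. -/

import Mathlib

open Filter

/-- Queue length: `Q(Z,B)(y) = sup_{x ≤ y} [(B(y)-B(x)) - (Z(y)-Z(x))]`. -/
noncomputable def Qmap (Z B : ℝ → ℝ) (y : ℝ) : ℝ :=
  sSup ((fun x => (B y - B x) - (Z y - Z x)) '' Set.Iic y)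

/-- Departure map: `D(Z,B)(y) = Z(y) + Q(Z,B)(y) - Q(Z,B)(0)`. -/
noncomputable def Dmap (Z B : ℝ → ℝ) (y : ℝ) : ℝ :=
  Z y + Qmap Z B y - Qmap Z B 0

/-- Reflected-output map: `R(Z,B)(y) = B(y) + Q(Z,B)(0) - Q(Z,B)(y)`. -/
noncomputable def Rmap (Z B : ℝ → ℝ) (y : ℝ) : ℝ :=
  B y + Qmap Z B 0 - Qmap Z B y

/-- If `B(x)/x → a` and `Z(x)/x → b` as `x → -∞` with `a < b`, then `D(Z,B)` and
`R(Z,B)` are well-defined (the defining suprema are finite) and have slopes `b` and `a` at `-∞`. -/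
theorem stmt6 (B Z : ℝ → ℝ) (hB : Continuous B) (hZ : Continuous Z)
    (hB0 : B 0 = 0) (hZ0 : Z 0 = 0) (a b : ℝ) (hab : a < b)
    (ha : Tendsto (fun x => B x / x) atBot (nhds a))
    (hb : Tendsto (fun x => Z x / x) atBot (nhds b)) :
    (∀ y : ℝ, BddAbove ((fun x => (B y - B x) - (Z y - Z x)) '' Set.Iic y)) ∧
    Tendsto (fun x => Rmap Z B x / x) atBot (nhds a) ∧
    Tendsto (fun x => Dmap Z B x / x) atBot (nhds b) := by
  set f : ℝ → ℝ := fun x => B x - Z x with hf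
  have hf0 : f 0 = 0 := by simp [hf, hB0, hZ0]
  have hfc : Continuous f := hB.sub hZ
  have hab' : a - b < 0 := sub_neg.2 hab
  have hfq : Tendsto (fun x => f x / x) atBot (nhds (a - b)) := by
    simpa [hf, sub_div] using ha.sub hb
  have hftop : Tendsto f atBot atTop := by
    have h1 : Tendsto (fun x : ℝ => (f x / x) * x) atBot atTop :=
      hfq.neg_mul_atBot hab' tendsto_id
    refine h1.congr' ?_
    filter_upwards [eventually_lt_atBot (0 : ℝ)] with x hx
    exact div_mul_cancel₀ _ hx.ne
  -- boundedness below of f on Iic y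
  have hbdd : ∀ y : ℝ, BddBelow (f '' Set.Iic y) := by
    intro y
    obtain ⟨c, hc⟩ := eventually_atBot.1 (hftop.eventually_ge_atTop 0)
    obtain ⟨K, hK⟩ := (isCompact_Icc (a := min c y) (b := y)).bddBelow_image
      hfc.continuousOn
    refine ⟨min K 0, ?_⟩
    rintro z ⟨x, hx, rfl⟩
    rcases le_or_gt x (min c y) with h | h
    · rcases eq_or_lt_of_le h with h' | h'
      · exact le_trans (min_le_left _ _)
          (hK ⟨x, ⟨le_of_eq h'.symm, hx⟩, rfl⟩)
      · exact le_trans (min_le_right _ _) (hc x (le_trans h'.le (min_le_left _ _)))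
    · exact le_trans (min_le_left _ _) (hK ⟨x, ⟨h.le, hx⟩, rfl⟩)
  have hne : ∀ y : ℝ, (f '' Set.Iic y).Nonempty := fun y => ⟨f y, y, le_refl y, rfl⟩
  set m : ℝ → ℝ := fun y => sInf (f '' Set.Iic y) with hm_def
  have hmle : ∀ y, m y ≤ f y := fun y => csInf_le (hbdd y) ⟨y, le_refl y, rfl⟩
  -- rewrite the sets in Qmap
  have hset : ∀ y : ℝ, (fun x => (B y - B x) - (Z y - Z x)) '' Set.Iic y
      = (fun x => f y - f x) '' Set.Iic y := by
    intro y
    apply Set.image_congr'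
    intro x; simp [hf]; ring
  have hbddA : ∀ y : ℝ, BddAbove ((fun x => (B y - B x) - (Z y - Z x)) '' Set.Iic y) := by
    intro y
    rw [hset y]
    obtain ⟨K, hK⟩ := hbdd y
    refine ⟨f y - K, ?_⟩
    rintro z ⟨x, hx, rfl⟩
    have : K ≤ f x := hK ⟨x, hx, rfl⟩
    show f y - f x ≤ f y - K
    linarith
  -- Q = f - m
  have hQ : ∀ y, Qmap Z B y = f y - m y := by
    intro y
    rw [Qmap, hset y]
    apply le_antisymm
    · apply csSup_le (Set.nonempty_Iic.image _)
      rintro z ⟨x, hx, rfl⟩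
      have : m y ≤ f x := csInf_le (hbdd y) ⟨x, hx, rfl⟩
      show f y - f x ≤ f y - m y
      linarith
    · have hub : BddAbove ((fun x => f y - f x) '' Set.Iic y) := by
        rw [← hset y]; exact hbddA y
      have : f y - sSup ((fun x => f y - f x) '' Set.Iic y) ≤ m y := by
        apply le_csInf (hne y)
        rintro z ⟨x, hx, rfl⟩
        have : f y - f x ≤ sSup ((fun x => f y - f x) '' Set.Iic y) :=
          le_csSup hub ⟨x, hx, rfl⟩
        linarith
      linarith
  -- slope of m
  have hmten : Tendsto (fun y => m y / y) atBot (nhds (a - b)) := by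
    rw [Metric.tendsto_nhds]
    intro ε hε
    set ε' := min (ε / 2) ((b - a) / 2) with hε'def
    have hε'pos : 0 < ε' := lt_min (by linarith) (by linarith)
    have hε'lt : ε' < ε := lt_of_le_of_lt (min_le_left _ _) (by linarith)
    have hcoef : a - b + ε' < 0 := by
      have : ε' ≤ (b - a) / 2 := min_le_right _ _
      linarith
    obtain ⟨Y, hY⟩ := eventually_atBot.1 ((Metric.tendsto_nhds.1 hfq) ε' hε'pos)
    rw [eventually_atBot]
    refine ⟨min Y (-1), fun y hy => ?_⟩
    have hy0 : y < 0 := lt_of_le_of_lt (le_trans hy (min_le_right _ _)) (by norm_num)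
    have hyY : y ≤ Y := le_trans hy (min_le_left _ _)
    have hbound : ∀ x : ℝ, x ≤ y → a - b - ε' ≤ f x / x ∧ f x / x ≤ a - b + ε' := by
      intro x hx
      have h := hY x (le_trans hx hyY)
      rw [Real.dist_eq, abs_lt] at h
      constructor <;> linarith [h.1, h.2]
    have hlow : (a - b + ε') * y ≤ m y := by
      apply le_csInf (hne y)
      rintro z ⟨x, hx, rfl⟩
      have hx0 : x < 0 := lt_of_le_of_lt hx hy0
      have h2 := (hbound x hx).2
      have h3 : (a - b + ε') * x ≤ f x := by
        rw [div_le_iff_of_neg hx0] at h2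
        exact h2
      have h4 : (a - b + ε') * y ≤ (a - b + ε') * x :=
        mul_le_mul_of_nonpos_left hx hcoef.le
      linarith
    have hup : m y ≤ (a - b - ε') * y := by
      refine le_trans (hmle y) ?_
      have h1 := (hbound y (le_refl y)).1
      rw [le_div_iff_of_neg hy0] at h1
      exact h1
    have hdiv1 : m y / y ≤ a - b + ε' := by
      rw [div_le_iff_of_neg hy0]
      exact hlow
    have hdiv2 : a - b - ε' ≤ m y / y := by
      rw [le_div_iff_of_neg hy0]
      exact hup
    rw [Real.dist_eq, abs_lt]
    constructor <;> linarith
  have hQ0 : Qmap Z B 0 = - m 0 := by rw [hQ 0, hf0]; ring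
  have hzero : Tendsto (fun y : ℝ => m 0 / y) atBot (nhds 0) := by
    have hinv : Tendsto (fun y : ℝ => y⁻¹) atBot (nhds 0) := by
      have h := ((tendsto_inv_atTop_zero (𝕜 := ℝ)).comp tendsto_neg_atBot_atTop).neg
      simp only [Function.comp_def, neg_zero] at h
      exact h.congr fun x => by rw [inv_neg, neg_neg]
    simpa [div_eq_mul_inv] using hinv.const_mul (m 0)
  refine ⟨hbddA, ?_, ?_⟩
  · -- Rmap y / y → a
    have hRval : ∀ y, Rmap Z B y = Z y + m y - m 0 := by
      intro y
      rw [Rmap, hQ y, hQ0]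
      simp only [hf]
      ring
    have htend : Tendsto (fun y => Z y / y + (m y / y - m 0 / y)) atBot
        (nhds (b + ((a - b) - 0))) := hb.add (hmten.sub hzero)
    have : Tendsto (fun y => Z y / y + (m y / y - m 0 / y)) atBot (nhds a) := by
      convert htend using 2; ring
    refine this.congr fun y => ?_
    rw [hRval y]
    ring
  · -- Dmap y / y → b
    have hDval : ∀ y, Dmap Z B y = B y - m y + m 0 := by
      intro y
      rw [Dmap, hQ y, hQ0]
      simp only [hf]
      ring
    have htend : Tendsto (fun y => B y / y - m y / y + m 0 / y) atBot
        (nhds (a - (a - b) + 0)) := (ha.sub hmten).add hzero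
    have : Tendsto (fun y => B y / y - m y / y + m 0 / y) atBot (nhds b) := by
      convert htend using 2; ring
    refine this.congr fun y => ?_
    rw [hDval y]
    ring
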